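/- For any nonzero complex numbers a = |a|e^{iθ_a} and b = |b|e^{iθ_b} with |a| ≠ |b| and θ_a ≠ θ_b (mod π), define f₁(c) = |a|e^{iθ_a} + c·|b|e^{iθ_b} and f₂(c) = |b|e^{iθ_a} + c·|a|e^{iθ_b}. Assuming f₁(±1) and f₂(±1) are all nonzero, the sum of phase differences satisfies [arg(f₁(1)) − arg(f₁(−1))] + [arg(f₂(1)) − arg(f₂(−1))] ≡ π (mod 2π). -/

import Mathlib

open Complex Real

/-- the sum of the phase differences of f₁ and f₂ (between c = 1 and c = -1)
is π modulo 2π, where f₁(c) = |a|e^{iθ_a} + c|b|e^{iθ_b}, f₂(c) = |b|e^{iθ_a} + c|a|e^{iθ_b}. -/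
theorem commutative_phase (a b : ℂ) (ha : a ≠ 0) (hb : b ≠ 0)
    (habs : ‖a‖ ≠ ‖b‖)
    (harg : ∀ k : ℤ, a.arg - b.arg ≠ k * Real.pi)
    (f₁ f₂ : ℂ → ℂ)
    (hf₁ : ∀ c : ℂ, f₁ c = (‖a‖ : ℂ) * Complex.exp (a.arg * Complex.I)
        + c * (‖b‖ : ℂ) * Complex.exp (b.arg * Complex.I))
    (hf₂ : ∀ c : ℂ, f₂ c = (‖b‖ : ℂ) * Complex.exp (a.arg * Complex.I)
        + c * (‖a‖ : ℂ) * Complex.exp (b.arg * Complex.I))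
    (h11 : f₁ 1 ≠ 0) (h1m : f₁ (-1) ≠ 0) (h21 : f₂ 1 ≠ 0) (h2m : f₂ (-1) ≠ 0) :
    ∃ k : ℤ, ((f₁ 1).arg - (f₁ (-1)).arg) + ((f₂ 1).arg - (f₂ (-1)).arg)
      = Real.pi + 2 * Real.pi * k := by

  have hA : (0:ℝ) < ‖a‖ := norm_pos_iff.mpr ha
  have hB : (0:ℝ) < ‖b‖ := norm_pos_iff.mpr hb
  set A : ℝ := ‖a‖ with hAdef
  set B : ℝ := ‖b‖ with hBdef
  set θa := a.arg with hθa
  set θb := b.arg with hθb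
  set u := Complex.exp (θa * Complex.I) with hu_def
  set v := Complex.exp (θb * Complex.I) with hv_def
  have hu : u ≠ 0 := Complex.exp_ne_zero _
  have hv : v ≠ 0 := Complex.exp_ne_zero _
  have huv : u * v ≠ 0 := mul_ne_zero hu hv
  set d : ℝ := θa - θb with hd
  have hw : Complex.exp ((d:ℂ) * Complex.I) + Complex.exp (-(d:ℂ) * Complex.I)
      = 2 * (Real.cos d : ℂ) := by
    rw [Complex.exp_mul_I, Complex.exp_mul_I, Complex.cos_neg, Complex.sin_neg,
      Complex.ofReal_cos]
    ring
  have e1 : u * v * Complex.exp ((d:ℂ) * Complex.I) = u * u := by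
    simp only [hu_def, hv_def, ← Complex.exp_add]
    congr 1
    push_cast [hd]
    ring
  have e2 : u * v * Complex.exp (-(d:ℂ) * Complex.I) = v * v := by
    simp only [hu_def, hv_def, ← Complex.exp_add]
    congr 1
    push_cast [hd]
    ring
  have key : u * u + v * v = u * v * (2 * (Real.cos d : ℂ)) := by
    rw [← e1, ← e2, ← mul_add, hw]
  set N : ℝ := A^2 + B^2 + 2 * A * B * Real.cos d with hNdef
  set D : ℝ := 2 * A * B * Real.cos d - (A^2 + B^2) with hDdef
  have hAB : A ≠ B := habs
  have hABsq : (0:ℝ) < (A - B)^2 := by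
    have : A - B ≠ 0 := sub_ne_zero.mpr hAB
    positivity
  have hN : (0:ℝ) < N := by
    nlinarith [Real.neg_one_le_cos d, mul_pos hA hB]
  have hD : (0:ℝ) < -D := by
    nlinarith [Real.cos_le_one d, mul_pos hA hB]
  have hP1 : f₁ 1 * f₂ 1 = ((N:ℝ) : ℂ) * (u * v) := by
    rw [hf₁, hf₂]
    push_cast [hNdef]
    rw [← Complex.ofReal_cos]
    linear_combination ((A:ℂ) * (B:ℂ)) * key
  have hPm : f₁ (-1) * f₂ (-1) = ((-D:ℝ) : ℂ) * (-(u * v)) := by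
    rw [hf₁, hf₂]
    push_cast [hDdef]
    rw [← Complex.ofReal_cos]
    linear_combination ((A:ℂ) * (B:ℂ)) * key
  have a1 : (((f₁ 1).arg : Real.Angle) + ((f₂ 1).arg : Real.Angle))
      = ((u * v).arg : Real.Angle) := by
    rw [← Complex.arg_mul_coe_angle h11 h21, hP1, Complex.arg_real_mul _ hN]
  have am : (((f₁ (-1)).arg : Real.Angle) + ((f₂ (-1)).arg : Real.Angle))
      = ((u * v).arg : Real.Angle) + (Real.pi : Real.Angle) := by
    rw [← Complex.arg_mul_coe_angle h1m h2m, hPm, Complex.arg_real_mul _ hD,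
      Complex.arg_neg_coe_angle huv]
  have hang : ((((f₁ 1).arg - (f₁ (-1)).arg) + ((f₂ 1).arg - (f₂ (-1)).arg) : ℝ) : Real.Angle)
      = ((Real.pi : ℝ) : Real.Angle) := by
    have : ((((f₁ 1).arg - (f₁ (-1)).arg) + ((f₂ 1).arg - (f₂ (-1)).arg) : ℝ) : Real.Angle)
        = (((f₁ 1).arg : Real.Angle) + ((f₂ 1).arg : Real.Angle))
          - (((f₁ (-1)).arg : Real.Angle) + ((f₂ (-1)).arg : Real.Angle)) := by
      simp only [Real.Angle.coe_add, Real.Angle.coe_sub]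
      abel
    rw [this, a1, am]
    abel_nf
    simp [Real.Angle.neg_coe_pi]
  rw [Real.Angle.angle_eq_iff_two_pi_dvd_sub] at hang
  obtain ⟨k, hk⟩ := hang
  exact ⟨k, by linarith⟩
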